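/- Let α ≥ 1. Then (C(α)/(1+2α))·(1 − 1/√α) ≤ H₁(α,α), where C(α) = ∫₀^∞ t^α / sinh t dt and H₁(α,α) = ∫₀^∞ (t^α / sinh t) · α/(α² + t²) dt. -/

import Mathlib

open MeasureTheory Filter Real

/-- `C(α) = ∫₀^∞ t^α / sinh t dt`. -/
noncomputable def Cconst (α : ℝ) : ℝ :=
  ∫ t in Set.Ioi (0:ℝ), t ^ α / Real.sinh t

/-- `H₁(α,x) = ∫₀^∞ (t^α / sinh t) · x/(x²+t²) dt`. -/
noncomputable def H1fun (α x : ℝ) : ℝ :=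
  ∫ t in Set.Ioi (0:ℝ), t ^ α / Real.sinh t * (x / (x ^ 2 + t ^ 2))

open Set Topology

lemma sinh_pos' {t : ℝ} (ht : 0 < t) : 0 < Real.sinh t := by
  simpa using Real.sinh_lt_sinh.2 ht

lemma csch_le {t : ℝ} (ht : 0 < t) : 1 / Real.sinh t ≤ (1/t + 2) * Real.exp (-t) := by
  have hs : 0 < Real.sinh t := sinh_pos' ht
  have hE : 0 < Real.exp t := Real.exp_pos t
  have h1 : (2*t) + 1 ≤ Real.exp t * Real.exp t := by
    have := Real.add_one_le_exp (2*t)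
    rw [two_mul, Real.exp_add] at this; linarith
  rw [div_le_iff₀ hs, Real.sinh_eq, Real.exp_neg]
  field_simp
  nlinarith [mul_pos ht hE, mul_pos hE hE]

lemma coth_le {t : ℝ} (ht : 0 < t) : Real.cosh t / Real.sinh t ≤ 1 + 1/t := by
  have hs : 0 < Real.sinh t := sinh_pos' ht
  have hE : 0 < Real.exp t := Real.exp_pos t
  have h1 : (2*t) + 1 ≤ Real.exp t * Real.exp t := by
    have := Real.add_one_le_exp (2*t)
    rw [two_mul, Real.exp_add] at this; linarith
  rw [div_le_iff₀ hs, Real.sinh_eq, Real.cosh_eq, Real.exp_neg]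
  field_simp
  nlinarith [mul_pos ht hE, mul_pos hE hE]

lemma contOn_csch {β : ℝ} : ContinuousOn (fun t : ℝ => t ^ β / Real.sinh t) (Set.Ioi 0) := by
  apply ContinuousOn.div
  · exact fun t ht => (Real.continuousAt_rpow_const t β (Or.inl (ne_of_gt ht))).continuousWithinAt
  · exact Real.continuous_sinh.continuousOn
  · exact fun t ht => (sinh_pos' ht).ne'

lemma csch_fun_nonneg {β : ℝ} {t : ℝ} (ht : t ∈ Set.Ioi (0:ℝ)) : 0 ≤ t ^ β / Real.sinh t :=
  div_nonneg (Real.rpow_nonneg (le_of_lt ht) β) (sinh_pos' ht).le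

lemma csch_fun_le {β : ℝ} {t : ℝ} (ht : t ∈ Set.Ioi (0:ℝ)) :
    t ^ β / Real.sinh t ≤ Real.exp (-t) * t ^ (β - 1) + 2 * (Real.exp (-t) * t ^ (β + 1 - 1)) := by
  have ht' : (0:ℝ) < t := ht
  have h := csch_le ht'
  have h2 : t ^ β / Real.sinh t = t ^ β * (1 / Real.sinh t) := by ring
  rw [h2]
  have h3 : t ^ β * (1 / Real.sinh t) ≤ t ^ β * ((1/t + 2) * Real.exp (-t)) :=
    mul_le_mul_of_nonneg_left h (Real.rpow_nonneg ht'.le β)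
  refine h3.trans (le_of_eq ?_)
  have h4 : t ^ (β - 1) = t ^ β / t := by
    rw [Real.rpow_sub ht', Real.rpow_one]
  have h5 : t ^ (β + 1 - 1) = t ^ β := by norm_num
  rw [h4, h5]; field_simp

lemma integrable_csch {β : ℝ} (hβ : 0 < β) :
    IntegrableOn (fun t : ℝ => t ^ β / Real.sinh t) (Set.Ioi 0) := by
  have h1 : IntegrableOn (fun t : ℝ =>
      Real.exp (-t) * t ^ (β - 1) + 2 * (Real.exp (-t) * t ^ (β + 1 - 1))) (Set.Ioi 0) :=
    (Real.GammaIntegral_convergent hβ).add ((Real.GammaIntegral_convergent (by linarith : (0:ℝ) < β + 1)).const_mul 2)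
  refine Integrable.mono h1 (contOn_csch.aestronglyMeasurable measurableSet_Ioi) ?_
  filter_upwards [ae_restrict_mem measurableSet_Ioi] with t ht
  rw [Real.norm_eq_abs, Real.norm_eq_abs, abs_of_nonneg (csch_fun_nonneg ht),
    abs_of_nonneg]
  · exact csch_fun_le ht
  · have ht' : (0:ℝ) < t := ht
    positivity

lemma integrable_coth {β : ℝ} (hβ : 0 < β) :
    IntegrableOn (fun t : ℝ => t ^ (β+1) * Real.cosh t / Real.sinh t ^ 2) (Set.Ioi 0) := by
  have h1 : IntegrableOn (fun t : ℝ =>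
      t ^ (β+1) / Real.sinh t + t ^ β / Real.sinh t) (Set.Ioi 0) :=
    (integrable_csch (by linarith)).add (integrable_csch hβ)
  have hm : ContinuousOn (fun t : ℝ => t ^ (β+1) * Real.cosh t / Real.sinh t ^ 2) (Set.Ioi 0) := by
    apply ContinuousOn.div
    · exact ContinuousOn.mul (fun t ht =>
        (Real.continuousAt_rpow_const t (β+1) (Or.inl (ne_of_gt ht))).continuousWithinAt)
        Real.continuous_cosh.continuousOn
    · exact (Real.continuous_sinh.pow 2).continuousOn
    · exact fun t ht => pow_ne_zero 2 (sinh_pos' ht).ne'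
  refine Integrable.mono h1 (hm.aestronglyMeasurable measurableSet_Ioi) ?_
  filter_upwards [ae_restrict_mem measurableSet_Ioi] with t ht
  have ht' : (0:ℝ) < t := ht
  have hs : 0 < Real.sinh t := sinh_pos' ht'
  have hc : 0 < Real.cosh t := Real.cosh_pos t
  rw [Real.norm_eq_abs, Real.norm_eq_abs, abs_of_nonneg (by positivity), abs_of_nonneg
    (by positivity)]
  have key : t ^ (β+1) * Real.cosh t / Real.sinh t ^ 2
      ≤ t ^ (β+1) * (1 + 1/t) / Real.sinh t := by
    rw [div_le_div_iff₀ (by positivity) hs]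
    have := coth_le ht'
    rw [div_le_iff₀ hs] at this
    have h5 : 0 ≤ t ^ (β+1) * Real.sinh t := by positivity
    calc t ^ (β+1) * Real.cosh t * Real.sinh t
        = (t ^ (β+1) * Real.sinh t) * Real.cosh t := by ring
      _ ≤ (t ^ (β+1) * Real.sinh t) * ((1 + 1/t) * Real.sinh t) :=
          mul_le_mul_of_nonneg_left this h5
      _ = t ^ (β+1) * (1 + 1/t) * Real.sinh t ^ 2 := by ring
  refine key.trans (le_of_eq ?_)
  have h4 : t ^ β = t ^ (β+1) / t := by
    rw [Real.rpow_add ht', Real.rpow_one]; field_simp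
  rw [h4]; field_simp

lemma tendsto_F_top {β : ℝ} (hβ : 0 < β) :
    Tendsto (fun t : ℝ => t ^ (β+1) / Real.sinh t) atTop (𝓝 0) := by
  have a := tendsto_rpow_mul_exp_neg_mul_atTop_nhds_zero β 1 one_pos
  have b := tendsto_rpow_mul_exp_neg_mul_atTop_nhds_zero (β+1) 1 one_pos
  have h1 : Tendsto (fun t : ℝ => Real.exp (-t) * t ^ (β+1-1) + 2*(Real.exp (-t) * t ^ (β+1+1-1)))
      atTop (𝓝 0) := by
    have := a.add (b.const_mul 2)
    norm_num at this
    refine this.congr (fun t => ?_)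
    simp only [add_sub_cancel_right, one_mul]
    ring
  apply squeeze_zero' ?_ ?_ h1
  · filter_upwards [eventually_gt_atTop (0:ℝ)] with t ht
    exact csch_fun_nonneg ht
  · filter_upwards [eventually_gt_atTop (0:ℝ)] with t ht
    exact csch_fun_le ht

lemma contWithin_F {β : ℝ} (hβ : 0 < β) :
    ContinuousWithinAt (fun t : ℝ => t ^ (β+1) / Real.sinh t) (Set.Ici 0) 0 := by
  have h0 : (fun t : ℝ => t ^ (β+1) / Real.sinh t) 0 = 0 := by
    simp [Real.zero_rpow (by positivity : β+1 ≠ 0)]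
  unfold ContinuousWithinAt
  rw [h0]
  have hg : Tendsto (fun t : ℝ => t ^ β) (nhdsWithin 0 (Set.Ici 0)) (𝓝 0) := by
    have := (Real.continuousAt_rpow_const 0 β (Or.inr hβ.le)).continuousWithinAt
      (s := Set.Ici (0:ℝ))
    unfold ContinuousWithinAt at this
    simpa [Real.zero_rpow hβ.ne'] using this
  apply squeeze_zero' ?_ ?_ hg
  · filter_upwards [self_mem_nhdsWithin] with t ht
    rcases eq_or_lt_of_le (Set.mem_Ici.mp ht) with h | h
    · simp [← h, Real.zero_rpow (by positivity : β+1 ≠ 0)]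
    · exact csch_fun_nonneg h
  · filter_upwards [self_mem_nhdsWithin] with t ht
    rcases eq_or_lt_of_le (Set.mem_Ici.mp ht) with h | h
    · simp [← h, Real.zero_rpow (by positivity : β+1 ≠ 0), Real.zero_rpow hβ.ne']
    · have hs : 0 < Real.sinh t := sinh_pos' h
      have hts : t ≤ Real.sinh t := (Real.self_lt_sinh_iff.2 h).le
      have : t ^ (β+1) / Real.sinh t ≤ t ^ (β+1) / t :=
        div_le_div_of_nonneg_left (Real.rpow_nonneg h.le _) h hts
      refine this.trans (le_of_eq ?_)
      rw [Real.rpow_add h, Real.rpow_one]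
      field_simp

lemma ibp {β : ℝ} (hβ : 0 < β) :
    ∫ t in Set.Ioi (0:ℝ), t ^ (β+1) * Real.cosh t / Real.sinh t ^ 2
      = (β+1) * ∫ t in Set.Ioi (0:ℝ), t ^ β / Real.sinh t := by
  set F : ℝ → ℝ := fun t => t ^ (β+1) / Real.sinh t with hF
  set G : ℝ → ℝ := fun t => (β+1) * (t ^ β / Real.sinh t)
      - t ^ (β+1) * Real.cosh t / Real.sinh t ^ 2 with hG
  have hderiv : ∀ x ∈ Set.Ioi (0:ℝ), HasDerivAt F (G x) x := by
    intro x hx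
    have hx' : (0:ℝ) < x := hx
    have hs : Real.sinh x ≠ 0 := (sinh_pos' hx').ne'
    have h1 : HasDerivAt (fun t : ℝ => t ^ (β+1)) ((β+1) * x ^ β) x := by
      have := Real.hasDerivAt_rpow_const (x := x) (p := β+1) (Or.inl hx'.ne')
      simpa [add_sub_cancel_right] using this
    have h2 := h1.div (Real.hasDerivAt_sinh x) hs
    refine HasDerivAt.congr_deriv h2 ?_
    rw [hG]
    field_simp
  have hint : IntegrableOn G (Set.Ioi 0) :=
    ((integrable_csch hβ).const_mul (β+1)).sub (integrable_coth hβ)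
  have h0 : F 0 = 0 := by
    simp [hF, Real.zero_rpow (by positivity : β+1 ≠ 0)]
  have key := integral_Ioi_of_hasDerivAt_of_tendsto (contWithin_F hβ) hderiv hint
    (tendsto_F_top hβ)
  norm_num [Real.zero_rpow (by positivity : β+1 ≠ 0)] at key
  rw [hG] at key
  rw [integral_sub ((integrable_csch hβ).const_mul (β+1)) (integrable_coth hβ),
    MeasureTheory.integral_const_mul] at key
  linarith

lemma step {β : ℝ} (hβ : 0 < β) : Cconst (β+1) ≤ (β+1) * Cconst β := by
  rw [Cconst, Cconst, ← ibp hβ]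
  apply setIntegral_mono_on (integrable_csch (by linarith)) (integrable_coth hβ)
    measurableSet_Ioi
  intro t ht
  have ht' : (0:ℝ) < t := ht
  have hs : 0 < Real.sinh t := sinh_pos' ht'
  have hc := (Real.sinh_lt_cosh t).le
  have ha : (0:ℝ) ≤ t ^ (β+1) := Real.rpow_nonneg ht'.le _
  rw [div_le_div_iff₀ hs (by positivity)]
  nlinarith [mul_le_mul_of_nonneg_left hc (mul_nonneg ha hs.le)]

lemma Cpos {β : ℝ} (hβ : 0 < β) : 0 < Cconst β := by
  rw [Cconst, setIntegral_pos_iff_support_of_nonneg_ae ?h1 (integrable_csch hβ)]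
  case h1 =>
    filter_upwards [ae_restrict_mem measurableSet_Ioi] with t ht
    exact csch_fun_nonneg ht
  refine lt_of_lt_of_le ?_ (measure_mono (?_ : Set.Ioo (0:ℝ) 1 ⊆ _))
  · rw [Real.volume_Ioo]; norm_num
  · intro t ht
    refine ⟨?_, ht.1⟩
    have : 0 < t ^ β / Real.sinh t :=
      div_pos (Real.rpow_pos_of_pos ht.1 β) (sinh_pos' ht.1)
    exact Function.mem_support.2 this.ne'

theorem stmt_10 (α : ℝ) (hα : 1 ≤ α) :
    (Cconst α / (1 + 2 * α)) * (1 - 1 / Real.sqrt α) ≤ H1fun α α := by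
  have hα0 : (0:ℝ) < α := lt_of_lt_of_le one_pos hα
  set B := Cconst α with hB
  have hBpos : 0 < B := Cpos hα0
  have hif : IntegrableOn (fun t : ℝ => t ^ α / Real.sinh t) (Set.Ioi 0) := integrable_csch hα0
  have hif2 : IntegrableOn (fun t : ℝ => t ^ (α+2) / Real.sinh t) (Set.Ioi 0) :=
    integrable_csch (by linarith)
  -- integrability of the two weighted functions
  have hcontD : Continuous (fun t : ℝ => α / (α ^ 2 + t ^ 2)) := by
    apply continuous_const.div (by continuity)
    intro t; positivity
  have hiA : IntegrableOn (fun t : ℝ => t ^ α / Real.sinh t * (α / (α ^ 2 + t ^ 2)))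
      (Set.Ioi 0) := by
    refine Integrable.mono (hif.const_mul (1/α))
      ((contOn_csch.mul hcontD.continuousOn).aestronglyMeasurable measurableSet_Ioi) ?_
    filter_upwards [ae_restrict_mem measurableSet_Ioi] with t ht
    have ht' : (0:ℝ) < t := ht
    have h1 : (0:ℝ) ≤ t ^ α / Real.sinh t := csch_fun_nonneg ht
    have h2 : α / (α ^ 2 + t ^ 2) ≤ 1/α := by
      rw [div_le_div_iff₀ (by positivity) hα0]
      nlinarith
    rw [Real.norm_eq_abs, Real.norm_eq_abs, abs_of_nonneg (by positivity),
      abs_of_nonneg (by positivity)]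
    calc t ^ α / Real.sinh t * (α / (α ^ 2 + t ^ 2)) ≤ t ^ α / Real.sinh t * (1/α) :=
          mul_le_mul_of_nonneg_left h2 h1
      _ = 1/α * (t ^ α / Real.sinh t) := by ring
  have hqeq : ∀ t ∈ Set.Ioi (0:ℝ),
      t ^ α / Real.sinh t * ((α ^ 2 + t ^ 2) / α)
        = α * (t ^ α / Real.sinh t) + (1/α) * (t ^ (α+2) / Real.sinh t) := by
    intro t ht
    have ht' : (0:ℝ) < t := ht
    have hs : Real.sinh t ≠ 0 := (sinh_pos' ht').ne'
    have h2 : t ^ (α+2) = t ^ α * t ^ (2:ℕ) := by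
      rw [Real.rpow_add ht', ← Real.rpow_natCast t 2]; norm_num
    rw [h2]; field_simp
  have hiD : IntegrableOn (fun t : ℝ => t ^ α / Real.sinh t * ((α ^ 2 + t ^ 2) / α))
      (Set.Ioi 0) := by
    refine IntegrableOn.congr_fun ?_ (fun t ht => (hqeq t ht).symm) measurableSet_Ioi
    exact (hif.const_mul α).add (hif2.const_mul (1/α))
  set A := ∫ t in Set.Ioi (0:ℝ), t ^ α / Real.sinh t * (α / (α ^ 2 + t ^ 2)) with hA
  set D := ∫ t in Set.Ioi (0:ℝ), t ^ α / Real.sinh t * ((α ^ 2 + t ^ 2) / α) with hD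
  -- Cauchy-Schwarz via nonneg quadratic
  have quad : ∀ lam : ℝ, 0 ≤ A * (lam * lam) + (-2*B) * lam + D := by
    intro lam
    have hsum : A * (lam * lam) + (-2*B) * lam + D
        = ∫ t in Set.Ioi (0:ℝ), ((lam*lam) * (t ^ α / Real.sinh t * (α / (α ^ 2 + t ^ 2)))
            + (-2*lam) * (t ^ α / Real.sinh t)
            + t ^ α / Real.sinh t * ((α ^ 2 + t ^ 2) / α)) := by
      have i2 : Integrable (fun t : ℝ => (lam*lam) * (t ^ α / Real.sinh t * (α / (α ^ 2 + t ^ 2))))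
          (volume.restrict (Set.Ioi 0)) := hiA.const_mul _
      have i3 : Integrable (fun t : ℝ => (-2*lam) * (t ^ α / Real.sinh t))
          (volume.restrict (Set.Ioi 0)) := hif.const_mul _
      have i1 : Integrable (fun t : ℝ => (lam*lam) * (t ^ α / Real.sinh t * (α / (α ^ 2 + t ^ 2)))
          + (-2*lam) * (t ^ α / Real.sinh t)) (volume.restrict (Set.Ioi 0)) := i2.add i3
      rw [integral_add i1 hiD, integral_add i2 i3,
        MeasureTheory.integral_const_mul, MeasureTheory.integral_const_mul]
      rw [hB, Cconst]; ring
    rw [hsum]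
    apply setIntegral_nonneg measurableSet_Ioi
    intro t ht
    have ht' : (0:ℝ) < t := ht
    have hX : (0:ℝ) < α ^ 2 + t ^ 2 := by positivity
    have hf0 : (0:ℝ) ≤ t ^ α / Real.sinh t := csch_fun_nonneg ht
    have hg0 : (0:ℝ) ≤ α / (α ^ 2 + t ^ 2) := by positivity
    have hq0 : (0:ℝ) ≤ (α ^ 2 + t ^ 2) / α := by positivity
    have h1 : Real.sqrt (α / (α ^ 2 + t ^ 2)) * Real.sqrt ((α ^ 2 + t ^ 2) / α) = 1 := by
      rw [← Real.sqrt_mul hg0]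
      rw [show α / (α ^ 2 + t ^ 2) * ((α ^ 2 + t ^ 2) / α) = 1 by field_simp]
      exact Real.sqrt_one
    have h2 : Real.sqrt (α / (α ^ 2 + t ^ 2)) ^ 2 = α / (α ^ 2 + t ^ 2) := Real.sq_sqrt hg0
    have h3 : Real.sqrt ((α ^ 2 + t ^ 2) / α) ^ 2 = (α ^ 2 + t ^ 2) / α := Real.sq_sqrt hq0
    have key : (lam*lam) * (t ^ α / Real.sinh t * (α / (α ^ 2 + t ^ 2)))
        + (-2*lam) * (t ^ α / Real.sinh t)
        + t ^ α / Real.sinh t * ((α ^ 2 + t ^ 2) / α)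
        = t ^ α / Real.sinh t *
          (lam * Real.sqrt (α / (α ^ 2 + t ^ 2)) - Real.sqrt ((α ^ 2 + t ^ 2) / α)) ^ 2 := by
      linear_combination (t ^ α / Real.sinh t * lam * lam) * h2.symm
        + (2 * (t ^ α / Real.sinh t) * lam) * h1 + (t ^ α / Real.sinh t) * h3.symm
    rw [key]
    positivity
  have hCS : B ^ 2 ≤ A * D := by
    have := discrim_le_zero quad
    rw [discrim] at this
    nlinarith
  -- value of D
  have hDval : D = α * B + (1/α) * Cconst (α+2) := by
    rw [hD, setIntegral_congr_fun measurableSet_Ioi hqeq,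
      integral_add (hif.const_mul α) (hif2.const_mul (1/α)),
      MeasureTheory.integral_const_mul, MeasureTheory.integral_const_mul, hB, Cconst, Cconst]
  have hC2 : Cconst (α+2) ≤ (α+1) * (α+2) * B := by
    have s2 : Cconst (α+1+1) ≤ (α+1+1) * Cconst (α+1) := step (by linarith)
    have s1 : Cconst (α+1) ≤ (α+1) * B := step hα0
    have h12 : α+1+1 = α+2 := by ring
    rw [h12] at s2
    nlinarith [Cpos (show (0:ℝ) < α+1 by linarith)]
  have hDpos : 0 < D := by
    rw [hDval]
    have := Cpos (show (0:ℝ) < α+2 by linarith)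
    positivity
  have hDub : D ≤ (2*α^2 + 3*α + 2) / α * B := by
    rw [hDval]
    have h2 : (1/α) * Cconst (α+2) ≤ (1/α) * ((α+1)*(α+2)*B) :=
      mul_le_mul_of_nonneg_left hC2 (by positivity)
    calc α*B + (1/α)*Cconst (α+2) ≤ α*B + (1/α)*((α+1)*(α+2)*B) := by linarith
      _ = (2*α^2+3*α+2)/α * B := by field_simp; ring
  -- conclude
  have hAB : B ^ 2 / D ≤ A := by
    rw [div_le_iff₀ hDpos]; exact hCS
  have hstep2 : B ^ 2 / ((2*α^2 + 3*α + 2) / α * B) ≤ B ^ 2 / D :=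
    div_le_div_of_nonneg_left (by positivity) hDpos hDub
  have hfinal : (B / (1 + 2 * α)) * (1 - 1 / Real.sqrt α)
      ≤ B ^ 2 / ((2*α^2 + 3*α + 2) / α * B) := by
    set s := Real.sqrt α with hsdef
    have hs2 : s ^ 2 = α := Real.sq_sqrt hα0.le
    have hs1 : 1 ≤ s := by
      rw [hsdef, show (1:ℝ) = Real.sqrt 1 by simp]
      exact Real.sqrt_le_sqrt hα
    have hspos : 0 < s := lt_of_lt_of_le one_pos hs1
    have hRHS : B ^ 2 / ((2*α^2 + 3*α + 2) / α * B) = α * B / (2*α^2 + 3*α + 2) := by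
      rw [eq_div_iff (by positivity)]
      field_simp
    rw [hRHS, show (1:ℝ) - 1/s = (s-1)/s by field_simp, div_mul_div_comm,
      div_le_div_iff₀ (by positivity) (by positivity)]
    rw [← hs2]
    nlinarith [mul_nonneg (mul_nonneg hBpos.le (sub_nonneg.2 hs1)) (pow_nonneg hspos.le 3),
      mul_nonneg hBpos.le (sq_nonneg (s-1)), mul_nonneg (mul_nonneg hBpos.le hspos.le) (sq_nonneg (s-1)),
      mul_nonneg (mul_nonneg hBpos.le (pow_nonneg hspos.le 2)) (sq_nonneg (s-1)),
      mul_nonneg (mul_nonneg hBpos.le (pow_nonneg hspos.le 3)) (sq_nonneg (s-1))]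
  calc (B / (1 + 2 * α)) * (1 - 1 / Real.sqrt α)
      ≤ B ^ 2 / ((2*α^2 + 3*α + 2) / α * B) := hfinal
    _ ≤ B ^ 2 / D := hstep2
    _ ≤ A := hAB
    _ = H1fun α α := rfl
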